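/- Suppose ε := ‖Δ⁻¹‖·‖ω‖ and ε′ := ‖Δ⁻¹‖·‖Ω‖ satisfy ε ≥ 0, ε′ > 0 and ε′ ≤ (1 − ε)/2, and set r = (1 − ε)/(2ε′) + √(((1 − ε)/(2ε′))² − 1). Then there exists an m×n complex matrix B with ‖B‖ ≤ r that is a fixed point of T(A) = −Δ⁻¹Ω + Δ⁻¹Aω + Δ⁻¹AΩ†A, i.e., B satisfies Bloch's equation Ω + ΔB = Bω + BΩ†B. -/

import Mathlib

open Matrix
open scoped Matrix.Norms.L2Operator
open Filter

set_option maxHeartbeats 1000000 in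
/-- If `ε = ‖Δ⁻¹‖‖ω‖` and `ε′ = ‖Δ⁻¹‖‖Ω‖` satisfy `ε ≥ 0`, `ε′ > 0`,
`ε′ ≤ (1-ε)/2`, and `r = (1-ε)/(2ε′) + √(((1-ε)/(2ε′))² - 1)`, then there exists an
`m × n` complex matrix `B` with `‖B‖ ≤ r` satisfying Bloch's equation
`Ω + ΔB = Bω + BΩᴴB` (i.e. a fixed point of `T(A) = -Δ⁻¹Ω + Δ⁻¹Aω + Δ⁻¹AΩᴴA`). -/
theorem stmt3 (m n : ℕ) (ω : Matrix (Fin n) (Fin n) ℂ)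
    (Δ : Matrix (Fin m) (Fin m) ℂ) (hΔ : IsUnit Δ)
    (Ω : Matrix (Fin m) (Fin n) ℂ)
    (ε ε' : ℝ) (hε : ε = ‖Δ⁻¹‖ * ‖ω‖) (hε' : ε' = ‖Δ⁻¹‖ * ‖Ω‖)
    (hε0 : 0 ≤ ε) (hε'0 : 0 < ε') (h : ε' ≤ (1 - ε) / 2)
    (r : ℝ) (hr : r = (1 - ε) / (2 * ε') + Real.sqrt (((1 - ε) / (2 * ε')) ^ 2 - 1)) :
    ∃ B : Matrix (Fin m) (Fin n) ℂ, ‖B‖ ≤ r ∧ Ω + Δ * B = B * ω + B * Ωᴴ * B := by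
  -- real analysis setup
  set c : ℝ := (1 - ε) / (2 * ε') with hc
  have hc1 : 1 ≤ c := (one_le_div (by linarith)).2 (by linarith)
  have hc2 : 2 * ε' * c = 1 - ε := by rw [hc, mul_div_cancel₀ _ (mul_pos two_pos hε'0).ne']
  set sq : ℝ := Real.sqrt (c ^ 2 - 1) with hsqdef
  have hsq0 : 0 ≤ sq := Real.sqrt_nonneg _
  have hsq2 : sq ^ 2 = c ^ 2 - 1 := Real.sq_sqrt (by nlinarith)
  have hsqc : sq ≤ c := by
    have : sq ≤ Real.sqrt (c ^ 2) := Real.sqrt_le_sqrt (by nlinarith)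
    rwa [Real.sqrt_sq (by linarith)] at this
  set L : ℝ := c - sq with hLdef
  have hL0 : 0 ≤ L := by simp [hLdef]; linarith
  have hLr : L ≤ r := by rw [hr, hLdef]; linarith
  have hLfix : ε' + ε * L + ε' * L ^ 2 = L := by
    rw [hLdef]; linear_combination (c - sq) * hc2 + ε' * hsq2
  -- the map T
  set T : Matrix (Fin m) (Fin n) ℂ → Matrix (Fin m) (Fin n) ℂ :=
    fun A => Δ⁻¹ * (-Ω + A * ω + A * Ωᴴ * A) with hT
  have hTdiff : ∀ X Y : Matrix (Fin m) (Fin n) ℂ,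
      ‖T X - T Y‖ ≤ ε * ‖X - Y‖ + ε' * ‖X‖ * ‖X - Y‖ + ε' * ‖Y‖ * ‖X - Y‖ := by
    intro X Y
    have hid : (-Ω + X * ω + X * Ωᴴ * X) - (-Ω + Y * ω + Y * Ωᴴ * Y)
        = (X - Y) * ω + ((X - Y) * Ωᴴ * X + Y * Ωᴴ * (X - Y)) := by
      simp only [Matrix.sub_mul, Matrix.mul_sub]; abel
    have h1 : T X - T Y = Δ⁻¹ * ((X - Y) * ω + ((X - Y) * Ωᴴ * X + Y * Ωᴴ * (X - Y))) := by
      rw [hT, ← Matrix.mul_sub, hid]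
    have b1 : ‖(X - Y) * ω‖ ≤ ‖X - Y‖ * ‖ω‖ := Matrix.l2_opNorm_mul _ _
    have b2 : ‖(X - Y) * Ωᴴ * X‖ ≤ ‖X - Y‖ * ‖Ω‖ * ‖X‖ := by
      calc ‖(X - Y) * Ωᴴ * X‖ ≤ ‖(X - Y) * Ωᴴ‖ * ‖X‖ := Matrix.l2_opNorm_mul _ _
        _ ≤ (‖X - Y‖ * ‖Ωᴴ‖) * ‖X‖ :=
            mul_le_mul_of_nonneg_right (Matrix.l2_opNorm_mul _ _) (norm_nonneg _)
        _ = ‖X - Y‖ * ‖Ω‖ * ‖X‖ := by rw [Matrix.l2_opNorm_conjTranspose]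
    have b3 : ‖Y * Ωᴴ * (X - Y)‖ ≤ ‖Y‖ * ‖Ω‖ * ‖X - Y‖ := by
      calc ‖Y * Ωᴴ * (X - Y)‖ ≤ ‖Y * Ωᴴ‖ * ‖X - Y‖ := Matrix.l2_opNorm_mul _ _
        _ ≤ (‖Y‖ * ‖Ωᴴ‖) * ‖X - Y‖ :=
            mul_le_mul_of_nonneg_right (Matrix.l2_opNorm_mul _ _) (norm_nonneg _)
        _ = ‖Y‖ * ‖Ω‖ * ‖X - Y‖ := by rw [Matrix.l2_opNorm_conjTranspose]
    have hW : ‖(X - Y) * ω + ((X - Y) * Ωᴴ * X + Y * Ωᴴ * (X - Y))‖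
        ≤ ‖X - Y‖ * ‖ω‖ + (‖X - Y‖ * ‖Ω‖ * ‖X‖ + ‖Y‖ * ‖Ω‖ * ‖X - Y‖) := by
      calc _ ≤ ‖(X - Y) * ω‖ + ‖(X - Y) * Ωᴴ * X + Y * Ωᴴ * (X - Y)‖ := norm_add_le _ _
        _ ≤ ‖(X - Y) * ω‖ + (‖(X - Y) * Ωᴴ * X‖ + ‖Y * Ωᴴ * (X - Y)‖) := by
            gcongr; exact norm_add_le _ _
        _ ≤ _ := by gcongr
    calc ‖T X - T Y‖ = ‖Δ⁻¹ * ((X - Y) * ω + ((X - Y) * Ωᴴ * X + Y * Ωᴴ * (X - Y)))‖ := by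
          rw [h1]
      _ ≤ ‖Δ⁻¹‖ * ‖(X - Y) * ω + ((X - Y) * Ωᴴ * X + Y * Ωᴴ * (X - Y))‖ :=
          Matrix.l2_opNorm_mul _ _
      _ ≤ ‖Δ⁻¹‖ * (‖X - Y‖ * ‖ω‖ + (‖X - Y‖ * ‖Ω‖ * ‖X‖ + ‖Y‖ * ‖Ω‖ * ‖X - Y‖)) :=
          mul_le_mul_of_nonneg_left hW (norm_nonneg _)
      _ = ε * ‖X - Y‖ + ε' * ‖X‖ * ‖X - Y‖ + ε' * ‖Y‖ * ‖X - Y‖ := by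
          rw [hε, hε']; ring
  have hT0 : ∀ X : Matrix (Fin m) (Fin n) ℂ, ‖T X‖ ≤ ε' + ε * ‖X‖ + ε' * ‖X‖ ^ 2 := by
    intro X
    have h0 : ‖T 0‖ ≤ ε' := by
      have : T 0 = Δ⁻¹ * (-Ω) := by simp [hT]
      rw [this]
      calc ‖Δ⁻¹ * (-Ω)‖ ≤ ‖Δ⁻¹‖ * ‖(-Ω)‖ := Matrix.l2_opNorm_mul _ _
        _ = ε' := by rw [norm_neg, hε']
    have h1 := hTdiff X 0
    simp only [norm_zero, sub_zero, mul_zero, zero_mul, add_zero] at h1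
    calc ‖T X‖ ≤ ‖T X - T 0‖ + ‖T 0‖ := by
          have := norm_add_le (T X - T 0) (T 0); simpa using this
      _ ≤ (ε * ‖X‖ + ε' * ‖X‖ * ‖X‖) + ε' := by linarith
      _ = ε' + ε * ‖X‖ + ε' * ‖X‖ ^ 2 := by ring
  -- the iterates
  set A : ℕ → Matrix (Fin m) (Fin n) ℂ := fun k => T^[k] 0 with hA
  set s : ℕ → ℝ := fun k => (fun t => ε' + ε * t + ε' * t ^ 2)^[k] 0 with hs
  have hAsucc : ∀ k, A (k + 1) = T (A k) := fun k => Function.iterate_succ_apply' T k 0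
  have hssucc : ∀ k, s (k + 1) = ε' + ε * s k + ε' * s k ^ 2 := fun k =>
    Function.iterate_succ_apply' _ k 0
  have hgmono : ∀ a b : ℝ, 0 ≤ a → a ≤ b → ε' + ε * a + ε' * a ^ 2 ≤ ε' + ε * b + ε' * b ^ 2 := by
    intro a b ha hab
    have q1 : ε * a ≤ ε * b := mul_le_mul_of_nonneg_left hab hε0
    have q2 : a ^ 2 ≤ b ^ 2 := pow_le_pow_left₀ ha hab 2
    have q3 : ε' * a ^ 2 ≤ ε' * b ^ 2 := mul_le_mul_of_nonneg_left q2 hε'0.le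
    linarith
  have hsfacts : ∀ k, 0 ≤ s k ∧ s k ≤ L ∧ s k ≤ s (k + 1) := by
    intro k
    induction k with
    | zero =>
      refine ⟨le_refl _, hL0, ?_⟩
      have hs00 : s 0 = 0 := rfl
      rw [hssucc, hs00]
      have := mul_nonneg hε0 (le_refl (0:ℝ))
      nlinarith [hε'0.le]
    | succ k ih =>
      obtain ⟨h0, hL', hmono⟩ := ih
      have h0' : 0 ≤ s (k + 1) := by
        rw [hssucc]
        have q1 := mul_nonneg hε0 h0
        have q2 := mul_nonneg hε'0.le (sq_nonneg (s k))
        linarith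
      have hL'' : s (k + 1) ≤ L := by
        rw [hssucc, ← hLfix]; exact hgmono _ _ h0 hL'
      have hmono' : s (k + 1) ≤ s (k + 2) := by
        rw [hssucc k, hssucc (k + 1)]; exact hgmono _ _ h0 hmono
      exact ⟨h0', hL'', hmono'⟩
  have hAbound : ∀ k, ‖A k‖ ≤ s k := by
    intro k
    induction k with
    | zero => simp [hA, hs]
    | succ k ih =>
      rw [hAsucc, hssucc]
      have h1 := hT0 (A k)
      have hn : 0 ≤ ‖A k‖ := norm_nonneg _
      have p1 : ε * ‖A k‖ ≤ ε * s k := mul_le_mul_of_nonneg_left ih hε0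
      have p2 : ‖A k‖ ^ 2 ≤ s k ^ 2 := pow_le_pow_left₀ hn ih 2
      have p3 : ε' * ‖A k‖ ^ 2 ≤ ε' * s k ^ 2 := mul_le_mul_of_nonneg_left p2 hε'0.le
      linarith
  have hdiffs : ∀ k, ‖A (k + 1) - A k‖ ≤ s (k + 1) - s k := by
    intro k
    induction k with
    | zero =>
      have : A 1 - A 0 = T 0 := by simp [hAsucc 0, hA]
      rw [this]
      have h0 : ‖T 0‖ ≤ ε' := by
        have := hT0 0; simpa using this
      have : s 1 - s 0 = ε' := by
        rw [hssucc]; show ε' + ε * s 0 + ε' * s 0 ^ 2 - s 0 = ε'; simp [hs]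
      linarith
    | succ k ih =>
      rw [hAsucc (k + 1), hAsucc k]
      have hd := hTdiff (T (A k)) (A k)
      have e1 : ‖T (A k)‖ ≤ s (k + 1) := by rw [← hAsucc k]; exact hAbound (k + 1)
      have e2 : ‖A k‖ ≤ s k := hAbound k
      have ih' : ‖T (A k) - A k‖ ≤ s (k + 1) - s k := by rw [← hAsucc k]; exact ih
      have e3 : 0 ≤ ‖T (A k) - A k‖ := norm_nonneg _
      have e4 : s (k + 2) - s (k + 1)
          = ε * (s (k + 1) - s k) + ε' * s (k + 1) * (s (k + 1) - s k)
            + ε' * s k * (s (k + 1) - s k) := by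
        rw [hssucc (k + 1), hssucc k]; ring
      have f1 : 0 ≤ s k := (hsfacts k).1
      have f2 : 0 ≤ s (k + 1) := (hsfacts (k + 1)).1
      have f3 : s k ≤ s (k + 1) := (hsfacts k).2.2
      rw [e4]
      have g1 : ε * ‖T (A k) - A k‖ ≤ ε * (s (k + 1) - s k) :=
        mul_le_mul_of_nonneg_left ih' hε0
      have g2 : ε' * ‖T (A k)‖ * ‖T (A k) - A k‖ ≤ ε' * s (k + 1) * (s (k + 1) - s k) := by
        have q : ‖T (A k)‖ * ‖T (A k) - A k‖ ≤ s (k + 1) * (s (k + 1) - s k) :=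
          mul_le_mul e1 ih' e3 f2
        calc ε' * ‖T (A k)‖ * ‖T (A k) - A k‖
            = ε' * (‖T (A k)‖ * ‖T (A k) - A k‖) := by ring
          _ ≤ ε' * (s (k + 1) * (s (k + 1) - s k)) := mul_le_mul_of_nonneg_left q hε'0.le
          _ = ε' * s (k + 1) * (s (k + 1) - s k) := by ring
      have g3 : ε' * ‖A k‖ * ‖T (A k) - A k‖ ≤ ε' * s k * (s (k + 1) - s k) := by
        have q : ‖A k‖ * ‖T (A k) - A k‖ ≤ s k * (s (k + 1) - s k) :=
          mul_le_mul e2 ih' e3 f1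
        calc ε' * ‖A k‖ * ‖T (A k) - A k‖
            = ε' * (‖A k‖ * ‖T (A k) - A k‖) := by ring
          _ ≤ ε' * (s k * (s (k + 1) - s k)) := mul_le_mul_of_nonneg_left q hε'0.le
          _ = ε' * s k * (s (k + 1) - s k) := by ring
      linarith
  have htel : ∀ p q, p ≤ q → ‖A q - A p‖ ≤ s q - s p := by
    intro p q hpq
    induction q, hpq using Nat.le_induction with
    | base => simp
    | succ q hpq ih =>
      calc ‖A (q + 1) - A p‖ ≤ ‖A (q + 1) - A q‖ + ‖A q - A p‖ := norm_sub_le_norm_sub_add_norm_sub _ _ _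
        _ ≤ (s (q + 1) - s q) + (s q - s p) := add_le_add (hdiffs q) ih
        _ = s (q + 1) - s p := by ring
  -- convergence
  have hsmono : Monotone s := monotone_nat_of_le_succ fun k => (hsfacts k).2.2
  have hsbdd : BddAbove (Set.range s) := ⟨L, by rintro _ ⟨k, rfl⟩; exact (hsfacts k).2.1⟩
  have hstend : Tendsto s atTop (nhds (⨆ k, s k)) := tendsto_atTop_ciSup hsmono hsbdd
  set ℓ : ℝ := ⨆ k, s k with hℓ
  have hsleℓ : ∀ k, s k ≤ ℓ := fun k => le_ciSup hsbdd k
  have hcauchy : CauchySeq A := by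
    apply cauchySeq_of_le_tendsto_0 (fun N => ℓ - s N)
    · intro a b N ha hb
      rcases le_total a b with hab | hab
      · rw [dist_comm, dist_eq_norm]
        calc ‖A b - A a‖ ≤ s b - s a := htel a b hab
          _ ≤ ℓ - s N := by have := hsleℓ b; have := hsmono ha; linarith
      · rw [dist_eq_norm]
        calc ‖A a - A b‖ ≤ s a - s b := htel b a hab
          _ ≤ ℓ - s N := by have := hsleℓ a; have := hsmono hb; linarith
    · have : Tendsto (fun N => ℓ - s N) atTop (nhds (ℓ - ℓ)) :=
        (tendsto_const_nhds).sub hstend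
      simpa using this
  obtain ⟨B, hB⟩ := cauchySeq_tendsto_of_complete hcauchy
  have hBL : ‖B‖ ≤ L :=
    le_of_tendsto hB.norm (Eventually.of_forall fun k =>
      (hAbound k).trans (hsfacts k).2.1)
  -- fixed point
  have hTB : T B = B := by
    have h1 : Tendsto (fun k => A (k + 1)) atTop (nhds B) :=
      hB.comp (tendsto_add_atTop_nat 1)
    have h2 : Tendsto (fun k => T (A k)) atTop (nhds (T B)) := by
      rw [tendsto_iff_norm_sub_tendsto_zero]
      have hu : Tendsto (fun k => ‖A k - B‖) atTop (nhds 0) :=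
        tendsto_iff_norm_sub_tendsto_zero.mp hB
      have hbound : ∀ k, ‖T (A k) - T B‖ ≤ (ε + 2 * ε' * L) * ‖A k - B‖ := by
        intro k
        have hd := hTdiff (A k) B
        have e1 : ‖A k‖ ≤ L := (hAbound k).trans (hsfacts k).2.1
        have e3 : 0 ≤ ‖A k - B‖ := norm_nonneg _
        have p1 : ε' * ‖A k‖ * ‖A k - B‖ ≤ ε' * L * ‖A k - B‖ :=
          mul_le_mul_of_nonneg_right (mul_le_mul_of_nonneg_left e1 hε'0.le) e3
        have p2 : ε' * ‖B‖ * ‖A k - B‖ ≤ ε' * L * ‖A k - B‖ :=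
          mul_le_mul_of_nonneg_right (mul_le_mul_of_nonneg_left hBL hε'0.le) e3
        have p3 : (ε + 2 * ε' * L) * ‖A k - B‖
            = ε * ‖A k - B‖ + ε' * L * ‖A k - B‖ + ε' * L * ‖A k - B‖ := by ring
        linarith
      have hlim : Tendsto (fun k => (ε + 2 * ε' * L) * ‖A k - B‖) atTop (nhds 0) := by
        have := hu.const_mul (ε + 2 * ε' * L); simpa using this
      exact squeeze_zero (fun k => norm_nonneg _) hbound hlim
    have h3 : (fun k => A (k + 1)) = fun k => T (A k) := funext hAsucc
    rw [h3] at h1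
    exact tendsto_nhds_unique h2 h1
  refine ⟨B, hBL.trans hLr, ?_⟩
  have hΔdet : IsUnit Δ.det := (Matrix.isUnit_iff_isUnit_det Δ).mp hΔ
  have hmul : Δ * B = -Ω + B * ω + B * Ωᴴ * B := by
    conv_lhs => rw [← hTB]
    rw [hT]
    rw [← Matrix.mul_assoc, Matrix.mul_nonsing_inv Δ hΔdet, Matrix.one_mul]
  rw [hmul]; abel
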